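/- Let G be a connected graph with n vertices and minimum degree at least k. Then γ_c(G) ≤ (n/(k+1))·(ln(k+1) + 4) - 2. -/

import Mathlib

/-- `X` is a dominating set of `G`: every vertex outside `X` has a neighbor in `X`. -/
def IsDominatingSet {V : Type*} (G : SimpleGraph V) (X : Set V) : Prop :=
  ∀ v ∉ X, ∃ u ∈ X, G.Adj u v

/-- The domination number `γ(G)`: the minimum size of a dominating set. -/
noncomputable def dominationNumber {V : Type*} (G : SimpleGraph V) : ℕ :=
  sInf {c | ∃ X : Set V, IsDominatingSet G X ∧ X.ncard = c}

/-- The connected domination number `γ_c(G)`: the minimum size of a dominating set inducing a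
connected subgraph. -/
noncomputable def connectedDominationNumber {V : Type*} (G : SimpleGraph V) : ℕ :=
  sInf {c | ∃ X : Set V, IsDominatingSet G X ∧ (G.induce X).Connected ∧ X.ncard = c}

open Finset

namespace CDNaux

variable {V : Type*}

section graphutils

variable {G : SimpleGraph V}

lemma induce_reachable_of_walk {P : Set V} {a b : V} (W : G.Walk a b)
    (hW : ∀ x ∈ W.support, x ∈ P) (ha : a ∈ P) (hb : b ∈ P) :
    (G.induce P).Reachable ⟨a, ha⟩ ⟨b, hb⟩ := by
  induction W with
  | nil => exact SimpleGraph.Reachable.refl _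
  | @cons a c b hadj q ih =>
      have hc : c ∈ P := hW c (by simp)
      have h1 : (G.induce P).Adj ⟨a, ha⟩ ⟨c, hc⟩ := hadj
      exact h1.reachable.trans (ih (fun x hx => hW x (by simp [hx])) hc hb)

lemma induce_reachable_mono {P Q : Set V} (hPQ : P ⊆ Q) {a b : V} {ha : a ∈ P} {hb : b ∈ P}
    (h : (G.induce P).Reachable ⟨a, ha⟩ ⟨b, hb⟩) :
    (G.induce Q).Reachable ⟨a, hPQ ha⟩ ⟨b, hPQ hb⟩ := by
  exact SimpleGraph.Reachable.map
    (⟨fun x => ⟨x.1, hPQ x.2⟩, fun hadj => hadj⟩ : G.induce P →g G.induce Q) h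

lemma induce_singleton_connected (v : V) : (G.induce ({v} : Set V)).Connected := by
  rw [SimpleGraph.connected_iff]
  refine ⟨?_, ⟨⟨v, rfl⟩⟩⟩
  rintro ⟨x, hx⟩ ⟨y, hy⟩
  rcases hx; rcases hy
  exact SimpleGraph.Reachable.refl _

lemma dist_getVert_left (hconn : G.Connected) {a b : V} (W : G.Walk a b) :
    ∀ i : ℕ, G.dist a (W.getVert i) ≤ i := by
  induction W with
  | @nil u =>
      intro i
      have h : (SimpleGraph.Walk.nil : G.Walk u u).getVert i = u := rfl
      rw [h, SimpleGraph.dist_self]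
      exact Nat.zero_le i
  | @cons a c b hadj q ih =>
      intro i
      cases i with
      | zero =>
          rw [SimpleGraph.Walk.getVert_zero, SimpleGraph.dist_self]
      | succ i =>
          have h1 : G.dist a c ≤ 1 := by
            simpa using SimpleGraph.dist_le (SimpleGraph.Walk.cons hadj SimpleGraph.Walk.nil)
          calc G.dist a ((SimpleGraph.Walk.cons hadj q).getVert (i+1))
              = G.dist a (q.getVert i) := by rw [SimpleGraph.Walk.getVert_cons_succ]
            _ ≤ G.dist a c + G.dist c (q.getVert i) := hconn.dist_triangle
            _ ≤ 1 + i := Nat.add_le_add h1 (ih i)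
            _ = i + 1 := Nat.add_comm 1 i

lemma dist_getVert_right {a b : V} (W : G.Walk a b) :
    ∀ i : ℕ, G.dist (W.getVert i) b ≤ W.length - i := by
  induction W with
  | @nil u =>
      intro i
      have h : (SimpleGraph.Walk.nil : G.Walk u u).getVert i = u := rfl
      rw [h, SimpleGraph.dist_self]
      exact Nat.zero_le _
  | @cons a c b hadj q ih =>
      intro i
      cases i with
      | zero =>
          simpa using SimpleGraph.dist_le (SimpleGraph.Walk.cons hadj q)
      | succ i =>
          have := ih i
          simpa [SimpleGraph.Walk.getVert_cons_succ, SimpleGraph.Walk.length_cons,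
            Nat.succ_sub_succ] using this

end graphutils

section merge
variable [Fintype V] [DecidableEq V] {G : SimpleGraph V} [DecidableRel G.Adj]

lemma packing (hconn : G.Connected) {k : ℕ} (hdeg : ∀ v, k ≤ G.degree v)
    (𝒞 : Finset (Set V)) (hne : ∀ C ∈ 𝒞, (C : Set V).Nonempty)
    (hsep : ∀ P ∈ 𝒞, ∀ Q ∈ 𝒞, P ≠ Q → ∀ u ∈ P, ∀ w ∈ Q, 3 ≤ G.dist u w) :
    𝒞.card ≤ Fintype.card V / (k + 1) := by
  classical
  rw [Nat.le_div_iff_mul_le (Nat.succ_pos k)]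
  rcases Finset.eq_empty_or_nonempty 𝒞 with h𝒞 | h𝒞
  · simp [h𝒞]
  haveI hV : Nonempty V := hconn.nonempty
  set rep : Set V → V := fun C => if h : C.Nonempty then h.choose else Classical.arbitrary V
    with hrepdef
  have hrep : ∀ C ∈ 𝒞, rep C ∈ C := by
    intro C hC
    have h : C.Nonempty := hne C hC
    simp only [hrepdef, dif_pos h]
    exact h.choose_spec
  set f : Set V → Finset V := fun C => insert (rep C) (G.neighborFinset (rep C)) with hfdef
  have hcardf : ∀ C, k + 1 ≤ (f C).card := by
    intro C
    have : (f C).card = G.degree (rep C) + 1 := by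
      rw [hfdef]
      simp [Finset.card_insert_of_notMem (G.notMem_neighborFinset_self (rep C)),
        SimpleGraph.card_neighborFinset_eq_degree]
    rw [this]
    exact Nat.add_le_add (hdeg _) le_rfl
  have hdistf : ∀ C z, z ∈ f C → G.dist (rep C) z ≤ 1 := by
    intro C z hz
    rcases Finset.mem_insert.mp hz with h | h
    · subst h; simp [SimpleGraph.dist_self]
    · have hadj : G.Adj (rep C) z := by rwa [← SimpleGraph.mem_neighborFinset]
      simpa using SimpleGraph.dist_le (SimpleGraph.Walk.cons hadj SimpleGraph.Walk.nil)
  have hdisj : ∀ P ∈ 𝒞, ∀ Q ∈ 𝒞, P ≠ Q → Disjoint (f P) (f Q) := by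
    intro P hP Q hQ hPQ
    rw [Finset.disjoint_left]
    intro z hzP hzQ
    have d1 := hdistf P z hzP
    have d2 := hdistf Q z hzQ
    have h3 := hsep P hP Q hQ hPQ (rep P) (hrep P hP) (rep Q) (hrep Q hQ)
    have : G.dist (rep P) (rep Q) ≤ 2 := by
      calc G.dist (rep P) (rep Q) ≤ G.dist (rep P) z + G.dist z (rep Q) := hconn.dist_triangle
        _ ≤ 1 + 1 := Nat.add_le_add d1 (by rwa [SimpleGraph.dist_comm])
        _ = 2 := rfl
    omega
  calc 𝒞.card * (k + 1) = ∑ _C ∈ 𝒞, (k + 1) := by rw [Finset.sum_const, smul_eq_mul]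
    _ ≤ ∑ C ∈ 𝒞, (f C).card := Finset.sum_le_sum (fun C _ => hcardf C)
    _ = (𝒞.biUnion f).card := (Finset.card_biUnion hdisj).symm
    _ ≤ Fintype.card V := by
        simpa using Finset.card_le_card (Finset.subset_univ (𝒞.biUnion f))

lemma merge (hconn : G.Connected) {k : ℕ} (hdeg : ∀ v, k ≤ G.degree v) :
    ∀ c (𝒞 : Finset (Set V)) (D : Set V),
      (∀ C ∈ 𝒞, C.Nonempty ∧ C ⊆ D ∧ (G.induce C).Connected) →
      ⋃₀ (↑𝒞 : Set (Set V)) = D → IsDominatingSet G D → 𝒞.card = c → 0 < c →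
      ∃ X : Set V, IsDominatingSet G X ∧ (G.induce X).Connected ∧
        X.ncard + 2 ≤ D.ncard + c + min c (Fintype.card V / (k + 1)) := by
  intro c
  induction c using Nat.strong_induction_on with
  | _ c IH =>
  intro 𝒞 D hpieces hcover hdom hcard hpos
  classical
  have hM1 : 1 ≤ Fintype.card V / (k + 1) := by
    haveI := hconn.nonempty
    have v := Classical.arbitrary V
    have h1 : k + 1 ≤ Fintype.card V :=
      Nat.succ_le_of_lt (lt_of_le_of_lt (hdeg v) (G.degree_lt_card_verts v))
    exact (Nat.one_le_div_iff (Nat.succ_pos k)).mpr h1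
  rcases eq_or_lt_of_le (show 1 ≤ c from hpos) with h1 | h2
  · -- one piece
    obtain ⟨C, hC⟩ := Finset.card_eq_one.mp (hcard.trans h1.symm)
    have hCmem : C ∈ 𝒞 := by simp [hC]
    have hDC : D = C := by
      rw [← hcover, hC]; simp
    refine ⟨D, hdom, ?_, ?_⟩
    · rw [hDC]; exact (hpieces C hCmem).2.2
    · have hmin : min c (Fintype.card V / (k + 1)) = c := by
        rw [← h1] at *; exact min_eq_left hM1
      omega
  · -- at least two pieces
    set M := Fintype.card V / (k + 1) with hMdef
    set T : Set ℕ :=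
      {d | ∃ P ∈ 𝒞, ∃ Q ∈ 𝒞, P ≠ Q ∧ ∃ u ∈ P, ∃ w ∈ Q, G.dist u w = d} with hTdef
    have hTne : T.Nonempty := by
      obtain ⟨P₁, hP₁, P₂, hP₂, hne12⟩ := Finset.one_lt_card.mp (hcard ▸ h2)
      obtain ⟨u, hu⟩ := (hpieces P₁ hP₁).1
      obtain ⟨w, hw⟩ := (hpieces P₂ hP₂).1
      exact ⟨G.dist u w, P₁, hP₁, P₂, hP₂, hne12, u, hu, w, hw, rfl⟩
    set μ := sInf T with hμdef
    have hμT : μ ∈ T := Nat.sInf_mem hTne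
    have hmin : ∀ d ∈ T, μ ≤ d := fun d hd => Nat.sInf_le hd
    obtain ⟨P₁, hP₁, P₂, hP₂, hne12, u, hu, w, hw, hdist⟩ := hμT
    obtain ⟨W, hWlen⟩ := SimpleGraph.Connected.exists_walk_length_eq_dist hconn u w
    rw [hdist] at hWlen
    have huD : u ∈ D := (hpieces P₁ hP₁).2.1 hu
    have hwD : w ∈ D := (hpieces P₂ hP₂).2.1 hw
    -- minimal distance is at most 3
    have hμ3 : μ ≤ 3 := by
      by_contra hcon
      push_neg at hcon
      have h4 : 4 ≤ μ := hcon
      set x := W.getVert 2 with hxdef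
      have hux : G.dist u x ≤ 2 := dist_getVert_left hconn W 2
      have hxw : G.dist x w ≤ μ - 2 := by
        have := dist_getVert_right W 2
        rwa [hWlen] at this
      obtain ⟨t, htD, hut, htw⟩ :
          ∃ t, t ∈ D ∧ G.dist u t ≤ 3 ∧ G.dist t w ≤ μ - 1 := by
        by_cases hxD : x ∈ D
        · exact ⟨x, hxD, hux.trans (by omega), hxw.trans (by omega)⟩
        · obtain ⟨t, htD, htadj⟩ := hdom x hxD
          have hxt : G.dist x t ≤ 1 := by
            simpa using SimpleGraph.dist_le (SimpleGraph.Walk.cons htadj.symm SimpleGraph.Walk.nil)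
          have htx : G.dist t x ≤ 1 := by rwa [SimpleGraph.dist_comm]
          refine ⟨t, htD, ?_, ?_⟩
          · calc G.dist u t ≤ G.dist u x + G.dist x t := hconn.dist_triangle
              _ ≤ 2 + 1 := Nat.add_le_add hux hxt
              _ = 3 := rfl
          · calc G.dist t w ≤ G.dist t x + G.dist x w := hconn.dist_triangle
              _ ≤ 1 + (μ - 2) := Nat.add_le_add htx hxw
              _ ≤ μ - 1 := by omega
      rw [← hcover] at htD
      obtain ⟨Q, hQmem, htQ⟩ := htD
      have hQ𝒞 : Q ∈ 𝒞 := hQmem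
      by_cases hQP₂ : Q = P₂
      · subst hQP₂
        have hmem : G.dist u t ∈ T := ⟨P₁, hP₁, Q, hQ𝒞, hne12, u, hu, t, htQ, rfl⟩
        have := hmin _ hmem
        omega
      · have hmem : G.dist t w ∈ T := ⟨Q, hQ𝒞, P₂, hP₂, hQP₂, t, htQ, w, hw, rfl⟩
        have := hmin _ hmem
        omega
    -- the merged configuration
    set S : Set V := {y | y ∈ W.support} with hSdef
    set P' : Set V := P₁ ∪ P₂ ∪ S with hP'def
    set D' : Set V := D ∪ S with hD'def
    set 𝒞' : Finset (Set V) := insert P' ((𝒞.erase P₁).erase P₂) with h𝒞'def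
    have hP₁P' : P₁ ⊆ P' := fun y hy => Or.inl (Or.inl hy)
    have hP₂P' : P₂ ⊆ P' := fun y hy => Or.inl (Or.inr hy)
    have hSP' : S ⊆ P' := fun y hy => Or.inr hy
    have huP' : u ∈ P' := hP₁P' hu
    have hwP' : w ∈ P' := hP₂P' hw
    have huS : u ∈ S := W.start_mem_support
    have hwS : w ∈ S := W.end_mem_support
    -- connectivity of the merged piece
    have hP'conn : (G.induce P').Connected := by
      rw [SimpleGraph.connected_iff]
      refine ⟨?_, ⟨⟨u, huP'⟩⟩⟩
      have key : ∀ z (hz : z ∈ P'), (G.induce P').Reachable ⟨z, hz⟩ ⟨u, huP'⟩ := by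
        intro z hz
        have hz0 : z ∈ P₁ ∪ P₂ ∪ S := hz
        rcases hz0 with hz1 | hz2
        · rcases hz1 with hzP₁ | hzP₂
          · have hr := ((hpieces P₁ hP₁).2.2).preconnected ⟨z, hzP₁⟩ ⟨u, hu⟩
            exact induce_reachable_mono hP₁P' hr
          · have hr := ((hpieces P₂ hP₂).2.2).preconnected ⟨z, hzP₂⟩ ⟨w, hw⟩
            have h1 : (G.induce P').Reachable ⟨z, hz⟩ ⟨w, hwP'⟩ :=
              induce_reachable_mono hP₂P' hr
            have h2 : (G.induce P').Reachable ⟨w, hwP'⟩ ⟨u, huP'⟩ := by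
              refine induce_reachable_of_walk W.reverse ?_ hwP' huP'
              intro y hy
              apply hSP'
              rw [SimpleGraph.Walk.support_reverse, List.mem_reverse] at hy
              exact hy
            exact h1.trans h2
        · have hzsup : z ∈ W.support := hz2
          have h1 := induce_reachable_of_walk (W.takeUntil z hzsup)
            (fun y hy => hSP' (W.support_takeUntil_subset hzsup hy)) huP' (hSP' hz2)
          exact h1.symm
      intro a b
      exact (key a.1 a.2).trans (key b.1 b.2).symm
    -- properties of the new configuration
    have hpieces' : ∀ C ∈ 𝒞', C.Nonempty ∧ C ⊆ D' ∧ (G.induce C).Connected := by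
      intro C hC
      rcases Finset.mem_insert.mp hC with rfl | hC
      · refine ⟨⟨u, huP'⟩, ?_, hP'conn⟩
        intro y hy
        rcases hy with hy1 | hy2
        · rcases hy1 with h | h
          · exact Or.inl ((hpieces P₁ hP₁).2.1 h)
          · exact Or.inl ((hpieces P₂ hP₂).2.1 h)
        · exact Or.inr hy2
      · have hC𝒞 : C ∈ 𝒞 := Finset.mem_of_mem_erase (Finset.mem_of_mem_erase hC)
        obtain ⟨h1, h2, h3⟩ := hpieces C hC𝒞
        exact ⟨h1, h2.trans Set.subset_union_left, h3⟩
    have hcover' : ⋃₀ (↑𝒞' : Set (Set V)) = D' := by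
      apply Set.eq_of_subset_of_subset
      · rintro y ⟨C, hC, hyC⟩
        exact (hpieces' C (Finset.mem_coe.mp hC)).2.1 hyC
      · rintro y (hyD | hyS)
        · rw [← hcover] at hyD
          obtain ⟨C, hC, hyC⟩ := hyD
          have hC𝒞 : C ∈ 𝒞 := hC
          have hP'mem : P' ∈ (↑𝒞' : Set (Set V)) :=
            Finset.mem_coe.mpr (Finset.mem_insert_self _ _)
          by_cases h1 : C = P₁
          · exact ⟨P', hP'mem, hP₁P' (h1 ▸ hyC)⟩
          · by_cases h2 : C = P₂
            · exact ⟨P', hP'mem, hP₂P' (h2 ▸ hyC)⟩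
            · refine ⟨C, ?_, hyC⟩
              refine Finset.mem_coe.mpr (Finset.mem_insert_of_mem ?_)
              exact Finset.mem_erase.mpr ⟨h2, Finset.mem_erase.mpr ⟨h1, hC𝒞⟩⟩
        · exact ⟨P', Finset.mem_coe.mpr (Finset.mem_insert_self _ _), hSP' hyS⟩
    have hdom' : IsDominatingSet G D' := by
      intro v hv
      obtain ⟨t, ht, hadj⟩ := hdom v (fun hD => hv (Or.inl hD))
      exact ⟨t, Or.inl ht, hadj⟩
    have hcard' : ((𝒞.erase P₁).erase P₂).card = c - 2 := by
      rw [Finset.card_erase_of_mem (Finset.mem_erase.mpr ⟨Ne.symm hne12, hP₂⟩),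
        Finset.card_erase_of_mem hP₁, hcard]
      omega
    have h𝒞'card : 𝒞'.card ≤ c - 1 := by
      calc 𝒞'.card ≤ ((𝒞.erase P₁).erase P₂).card + 1 := Finset.card_insert_le _ _
        _ = c - 2 + 1 := by rw [hcard']
        _ ≤ c - 1 := by omega
    have hpos' : 0 < 𝒞'.card := Finset.card_pos.mpr ⟨P', Finset.mem_insert_self _ _⟩
    -- cardinality of D'
    have hD'card : D'.ncard ≤ D.ncard + (μ - 1) := by
      classical
      set F : Finset V := W.support.toFinset with hFdef
      have hsubD' : D' ⊆ D ∪ (↑(F \ {u, w}) : Set V) := by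
        rintro y (hyD | hyS)
        · exact Or.inl hyD
        · by_cases h1 : y = u
          · exact Or.inl (h1 ▸ huD)
          · by_cases h2 : y = w
            · exact Or.inl (h2 ▸ hwD)
            · refine Or.inr ?_
              rw [Finset.coe_sdiff]
              refine ⟨by have hyW : y ∈ W.support := hyS; simpa [hFdef, List.mem_toFinset] using hyW, ?_⟩
              simp only [Finset.coe_insert, Finset.coe_singleton, Set.mem_insert_iff,
                Set.mem_singleton_iff]
              tauto
      have hFcard : F.card ≤ μ + 1 := by
        calc F.card ≤ W.support.length := List.toFinset_card_le _
          _ = μ + 1 := by rw [SimpleGraph.Walk.length_support, hWlen]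
      have hsd : (F \ {u, w}).card ≤ μ - 1 := by
        by_cases huw : u = w
        · have hμ0 : μ = 0 := by
            rw [← hdist, huw, SimpleGraph.dist_self]
          have hsub : ({u} : Finset V) ⊆ F := by
            intro y hy
            rw [Finset.mem_singleton] at hy
            subst hy
            simpa [hFdef, List.mem_toFinset] using huS
          have : (F \ {u, w}).card ≤ (F \ {u}).card := by
            apply Finset.card_le_card
            apply Finset.sdiff_subset_sdiff (le_refl F)
            intro y hy
            simp only [Finset.mem_singleton] at hy
            simp [hy]
          have h2 : (F \ {u}).card = F.card - 1 := by
            rw [Finset.card_sdiff_of_subset hsub, Finset.card_singleton]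
          omega
        · have hsub : ({u, w} : Finset V) ⊆ F := by
            intro y hy
            rcases Finset.mem_insert.mp hy with rfl | hy
            · simpa [hFdef, List.mem_toFinset] using huS
            · rw [Finset.mem_singleton] at hy
              subst hy
              simpa [hFdef, List.mem_toFinset] using hwS
          have h2 : (F \ {u, w}).card = F.card - 2 := by
            rw [Finset.card_sdiff_of_subset hsub, Finset.card_insert_of_notMem (by simpa using huw),
              Finset.card_singleton]
          omega
      calc D'.ncard ≤ (D ∪ (↑(F \ {u, w}) : Set V)).ncard :=
            Set.ncard_le_ncard hsubD' (Set.toFinite _)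
        _ ≤ D.ncard + (↑(F \ {u, w}) : Set V).ncard := Set.ncard_union_le _ _
        _ = D.ncard + (F \ {u, w}).card := by rw [Set.ncard_coe_finset]
        _ ≤ D.ncard + (μ - 1) := by omega
    -- apply the induction hypothesis
    set c' := 𝒞'.card with hc'def
    have hc'lt : c' < c := by omega
    obtain ⟨X, hXdom, hXconn, hXcard⟩ :=
      IH c' hc'lt 𝒞' D' hpieces' hcover' hdom' rfl hpos'
    refine ⟨X, hXdom, hXconn, ?_⟩
    have hminle : min c' M ≤ min c M := min_le_min (le_of_lt hc'lt) le_rfl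
    by_cases hμ2 : μ ≤ 2
    · -- cheap merge
      have : X.ncard + 2 ≤ D.ncard + 1 + c' + min c' M := by omega
      have hc'c : c' + 1 ≤ c := by omega
      omega
    · -- expensive merge: all pieces pairwise at distance ≥ 3
      have hμ3' : μ = 3 := by omega
      have hsep : ∀ P ∈ 𝒞, ∀ Q ∈ 𝒞, P ≠ Q → ∀ a ∈ P, ∀ b ∈ Q, 3 ≤ G.dist a b := by
        intro P hP Q hQ hPQ a ha b hb
        have : G.dist a b ∈ T := ⟨P, hP, Q, hQ, hPQ, a, ha, b, hb, rfl⟩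
        have := hmin _ this
        omega
      have hpack : c ≤ M := by
        rw [← hcard]
        exact packing hconn hdeg 𝒞 (fun C hC => (hpieces C hC).1) hsep
      have hminc : min c M = c := min_eq_left hpack
      have hminc' : min c' M ≤ c' := Nat.min_le_left _ _
      omega
end merge

lemma induce_reachable_of_walk_le {G' G : SimpleGraph V} (hle : G' ≤ G) {P : Set V} {a b : V}
    (W : G'.Walk a b) (hW : ∀ x ∈ W.support, x ∈ P) (ha : a ∈ P) (hb : b ∈ P) :
    (G.induce P).Reachable ⟨a, ha⟩ ⟨b, hb⟩ := by
  induction W with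
  | nil => exact SimpleGraph.Reachable.refl _
  | @cons a c b hadj q ih =>
      have hc : c ∈ P := hW c (by simp)
      have h1 : (G.induce P).Adj ⟨a, ha⟩ ⟨c, hc⟩ := hle hadj
      exact h1.reachable.trans (ih (fun x hx => hW x (by simp [hx])) hc hb)

lemma one_le_sum_inv {α : Type*} {s : Finset α} (hs : s.Nonempty) (g : α → ℕ)
    (h1 : ∀ v ∈ s, 0 < g v) (h2 : ∀ v ∈ s, g v ≤ s.card) :
    (1 : ℝ) ≤ ∑ v ∈ s, 1 / (g v : ℝ) := by
  have hcard : 0 < s.card := Finset.card_pos.mpr hs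
  have hcardR : (0 : ℝ) < (s.card : ℝ) := by exact_mod_cast hcard
  calc (1 : ℝ) = s.card * (1 / (s.card : ℝ)) := by field_simp
    _ = ∑ _v ∈ s, (1 : ℝ) / (s.card : ℝ) := by rw [Finset.sum_const, nsmul_eq_mul]
    _ ≤ ∑ v ∈ s, 1 / (g v : ℝ) := by
        apply Finset.sum_le_sum
        intro v hv
        apply one_div_le_one_div_of_le
        · exact_mod_cast h1 v hv
        · exact_mod_cast h2 v hv

section classes
variable [Fintype V] [DecidableEq V] (G : SimpleGraph V) [DecidableRel G.Adj]

lemma classes_exist (A : Finset V) :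
    ∃ 𝒞 : Finset (Set V),
      (∀ C ∈ 𝒞, C.Nonempty ∧ C ⊆ (↑A : Set V) ∧ (G.induce C).Connected) ∧
      ⋃₀ (↑𝒞 : Set (Set V)) = (↑A : Set V) ∧
      ((𝒞.card : ℝ) ≤ ∑ v ∈ A, (1 : ℝ) / (((insert v (G.neighborFinset v)) ∩ A).card : ℝ)) := by
  classical
  set GA : SimpleGraph V :=
    { Adj := fun a b => a ∈ A ∧ b ∈ A ∧ G.Adj a b
      symm := ⟨fun a b h => ⟨h.2.1, h.1, h.2.2.symm⟩⟩
      loopless := ⟨fun a h => G.loopless.irrefl a h.2.2⟩ } with hGAdef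
  have hGAle : GA ≤ G := fun a b h => h.2.2
  -- the representative map
  set e := (Fintype.equivFin V)
  set cls : V → Finset V := fun v => A.filter (fun u => GA.Reachable u v) with hclsdef
  have hclsmem : ∀ v ∈ A, v ∈ cls v := by
    intro v hv
    simp only [hclsdef, Finset.mem_filter]
    exact ⟨hv, SimpleGraph.Reachable.refl v⟩
  set ρ : V → V := fun v =>
    if h : (cls v).Nonempty then e.symm (((cls v).image e).min' (h.image e)) else v
    with hρdef
  have hρmem : ∀ v ∈ A, ρ v ∈ cls v := by
    intro v hv
    have h : (cls v).Nonempty := ⟨v, hclsmem v hv⟩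
    simp only [hρdef, dif_pos h]
    have hm := Finset.min'_mem ((cls v).image e) (h.image e)
    obtain ⟨y, hy, hye⟩ := Finset.mem_image.mp hm
    rw [← hye, Equiv.symm_apply_apply]
    exact hy
  have hclseq : ∀ u v : V, GA.Reachable u v → cls u = cls v := by
    intro u v huv
    apply Finset.filter_congr
    intro x _
    constructor
    · exact fun h => h.trans huv
    · exact fun h => h.trans huv.symm
  have hendA : ∀ {a b : V} (_ : GA.Walk a b), a ≠ b → b ∈ A := by
    intro a b W
    induction W with
    | nil => intro h; exact absurd rfl h
    | @cons a c b hadj q ih =>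
        intro _
        by_cases hcb : c = b
        · exact hcb ▸ hadj.2.1
        · exact ih hcb
  have hρeq : ∀ u v : V, GA.Reachable u v → ρ u = ρ v := by
    intro u v huv
    by_cases huv' : u = v
    · rw [huv']
    · have hvA : v ∈ A := by
        obtain ⟨W⟩ := huv
        exact hendA W huv'
      have hne : (cls v).Nonempty := ⟨v, hclsmem v hvA⟩
      simp only [hρdef, hclseq u v huv]
      rw [dif_pos hne, dif_pos hne]
  -- pieces
  set Pc : V → Set V := fun r => {y | y ∈ A ∧ GA.Reachable y r} with hPcdef
  have hwalkmem : ∀ {z r : V} (W : GA.Walk z r), r ∈ A → ∀ y ∈ W.support, y ∈ A := by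
    intro z r W
    induction W with
    | nil => intro hr y hy; simp at hy; subst hy; exact hr
    | @cons a c b hadj q ih =>
        intro hr y hy
        rw [SimpleGraph.Walk.support_cons, List.mem_cons] at hy
        rcases hy with rfl | hy
        · exact hadj.1
        · exact ih hr y hy
  have hwalkreach : ∀ {z r : V} (W : GA.Walk z r), ∀ y ∈ W.support, GA.Reachable y r := by
    intro z r W
    induction W with
    | nil => intro y hy; simp at hy; subst hy; exact SimpleGraph.Reachable.refl _
    | @cons a c b hadj q ih =>
        intro y hy
        rw [SimpleGraph.Walk.support_cons, List.mem_cons] at hy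
        rcases hy with rfl | hy
        · exact ⟨SimpleGraph.Walk.cons hadj q⟩
        · exact ih y hy
  have hPcconn : ∀ r ∈ A, GA.Reachable r r → (G.induce (Pc r)).Connected := by
    intro r hr _
    have hrPc : r ∈ Pc r := ⟨hr, SimpleGraph.Reachable.refl r⟩
    rw [SimpleGraph.connected_iff]
    refine ⟨?_, ⟨⟨r, hrPc⟩⟩⟩
    have key : ∀ z (hz : z ∈ Pc r), (G.induce (Pc r)).Reachable ⟨z, hz⟩ ⟨r, hrPc⟩ := by
      intro z hz
      obtain ⟨W⟩ := hz.2
      refine induce_reachable_of_walk_le hGAle W ?_ hz hrPc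
      intro y hy
      exact ⟨hwalkmem W hr y hy, hwalkreach W y hy⟩
    intro a b
    exact (key a.1 a.2).trans (key b.1 b.2).symm
  refine ⟨(A.image ρ).image Pc, ?_, ?_, ?_⟩
  · intro C hC
    obtain ⟨r, hr, hrC⟩ := Finset.mem_image.mp hC
    obtain ⟨v, hv, hvr⟩ := Finset.mem_image.mp hr
    have hrA : r ∈ A := by
      have := hρmem v hv
      rw [hvr] at this
      exact (Finset.mem_filter.mp this).1
    subst hrC
    refine ⟨⟨r, ⟨hrA, SimpleGraph.Reachable.refl r⟩⟩, ?_, hPcconn r hrA (SimpleGraph.Reachable.refl r)⟩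
    intro y hy
    exact hy.1
  · apply Set.eq_of_subset_of_subset
    · rintro y ⟨C, hC, hyC⟩
      obtain ⟨r, _, hrC⟩ := Finset.mem_image.mp (Finset.mem_coe.mp hC)
      subst hrC
      exact hyC.1
    · intro v hv
      have hvA : v ∈ A := hv
      have hρv := hρmem v hvA
      have hρvA : ρ v ∈ A := (Finset.mem_filter.mp hρv).1
      have hreach : GA.Reachable (ρ v) v := (Finset.mem_filter.mp hρv).2
      refine ⟨Pc (ρ v), ?_, ⟨hvA, hreach.symm⟩⟩
      exact Finset.mem_coe.mpr (Finset.mem_image.mpr ⟨ρ v,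
        Finset.mem_image.mpr ⟨v, hvA, rfl⟩, rfl⟩)
  · -- counting
    have h1 : (((A.image ρ).image Pc).card : ℝ) ≤ ((A.image ρ).card : ℝ) := by
      exact_mod_cast Nat.cast_le.mpr (Finset.card_image_le)
    refine h1.trans ?_
    have hfib : ∀ v ∈ A, ρ v ∈ A.image ρ := fun v hv => Finset.mem_image_of_mem ρ hv
    rw [← Finset.sum_fiberwise_of_maps_to hfib
      (fun v => (1 : ℝ) / (((insert v (G.neighborFinset v)) ∩ A).card : ℝ))]
    rw [Finset.card_eq_sum_ones (A.image ρ)]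
    push_cast
    apply Finset.sum_le_sum
    intro r hr
    -- the fiber of r
    set fib := A.filter (fun v => ρ v = r) with hfibdef
    obtain ⟨v₀, hv₀, hv₀r⟩ := Finset.mem_image.mp hr
    have hrfib : r ∈ fib := by
      have hmem := hρmem v₀ hv₀
      have hrA : r ∈ A := by
        rw [← hv₀r]; exact (Finset.mem_filter.mp hmem).1
      have hreach : GA.Reachable r v₀ := by
        rw [← hv₀r]; exact (Finset.mem_filter.mp hmem).2
      have : ρ r = ρ v₀ := hρeq r v₀ hreach
      rw [hfibdef, Finset.mem_filter]
      exact ⟨hrA, this.trans hv₀r⟩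
    have hfibpos : 0 < fib.card := Finset.card_pos.mpr ⟨r, hrfib⟩
    have hsub : ∀ v ∈ fib, ((insert v (G.neighborFinset v)) ∩ A) ⊆ fib := by
      intro v hv u hu
      obtain ⟨huNv, huA⟩ := Finset.mem_inter.mp hu
      have hvA : v ∈ A := (Finset.mem_filter.mp hv).1
      have hreach : GA.Reachable u v := by
        rcases Finset.mem_insert.mp huNv with rfl | hadj
        · exact SimpleGraph.Reachable.refl _
        · exact (SimpleGraph.Adj.reachable (⟨huA, hvA, (SimpleGraph.mem_neighborFinset G v u).mp hadj |>.symm⟩ : GA.Adj u v))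
      rw [hfibdef, Finset.mem_filter]
      exact ⟨huA, (hρeq u v hreach).trans (Finset.mem_filter.mp hv).2⟩
    refine one_le_sum_inv ⟨r, hrfib⟩ (fun v => ((insert v (G.neighborFinset v)) ∩ A).card) ?_ ?_
    · intro v hv
      have hvA : v ∈ A := (Finset.mem_filter.mp hv).1
      exact Finset.card_pos.mpr ⟨v, Finset.mem_inter.mpr ⟨Finset.mem_insert_self _ _, hvA⟩⟩
    · intro v hv
      exact Finset.card_le_card (hsub v hv)
end classes

section prob
variable [DecidableEq V]

/-- product weight of a subset -/
def wt (p q : ℝ) (B s : Finset V) : ℝ := ∏ v ∈ B, (if v ∈ s then p else q)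

lemma wt_nonneg {p q : ℝ} (hp : 0 ≤ p) (hq : 0 ≤ q) (B s : Finset V) : 0 ≤ wt p q B s :=
  Finset.prod_nonneg (fun v _ => by by_cases h : v ∈ s <;> simp [h, hp, hq])

lemma wt_empty_right (p q : ℝ) (B : Finset V) : wt p q B ∅ = q ^ B.card := by
  simp [wt]

lemma wt_insert {p q : ℝ} {a : V} {B : Finset V} (ha : a ∉ B) (s : Finset V) :
    wt p q (insert a B) s = (if a ∈ s then p else q) * wt p q B s := by
  rw [wt, Finset.prod_insert ha]; rfl

lemma wt_insert_right {p q : ℝ} {a : V} {B : Finset V} (ha : a ∉ B) (s : Finset V) :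
    wt p q B (insert a s) = wt p q B s := by
  apply Finset.prod_congr rfl
  intro v hv
  have : v ≠ a := fun h => ha (h ▸ hv)
  simp [Finset.mem_insert, this]

lemma wt_pow {p q : ℝ} {B t : Finset V} (ht : t ⊆ B) :
    wt p q B t = p ^ t.card * q ^ (B.card - t.card) := by
  have hB : t ∪ (B \ t) = B := Finset.union_sdiff_of_subset ht
  calc wt p q B t = ∏ v ∈ t ∪ (B \ t), (if v ∈ t then p else q) := by rw [wt, hB]
    _ = (∏ v ∈ t, (if v ∈ t then p else q)) * ∏ v ∈ B \ t, (if v ∈ t then p else q) :=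
        Finset.prod_union Finset.disjoint_sdiff
    _ = p ^ t.card * q ^ (B.card - t.card) := by
        rw [Finset.prod_congr rfl (fun v hv => if_pos hv),
          Finset.prod_congr rfl (fun v hv => if_neg (Finset.mem_sdiff.mp hv).2),
          Finset.prod_const, Finset.prod_const, Finset.card_sdiff_of_subset ht]

lemma wt_split (p q : ℝ) :
    ∀ (B₂ B₁ : Finset V) (_ : Disjoint B₁ B₂) (F : Finset V → ℝ),
      ∑ s ∈ (B₁ ∪ B₂).powerset, wt p q (B₁ ∪ B₂) s * F (s ∩ B₁)
        = (p + q) ^ B₂.card * ∑ t ∈ B₁.powerset, wt p q B₁ t * F t := by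
  intro B₂
  induction B₂ using Finset.induction_on with
  | empty =>
      intro B₁ _ F
      rw [Finset.union_empty, Finset.card_empty, pow_zero, one_mul]
      apply Finset.sum_congr rfl
      intro s hs
      rw [Finset.inter_eq_left.mpr (Finset.mem_powerset.mp hs)]
  | @insert a B₂ haB₂ ih =>
      intro B₁ hdisj F
      have haB₁ : a ∉ B₁ := fun h => (Finset.disjoint_right.mp hdisj (Finset.mem_insert_self a B₂)) h
      have haU : a ∉ B₁ ∪ B₂ := by
        simp only [Finset.mem_union, not_or]
        exact ⟨haB₁, haB₂⟩
      have hdisj' : Disjoint B₁ B₂ :=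
        Finset.disjoint_of_subset_right (Finset.subset_insert a B₂) hdisj
      have hU : B₁ ∪ insert a B₂ = insert a (B₁ ∪ B₂) := by
        ext y; simp only [Finset.mem_union, Finset.mem_insert]; tauto
      rw [hU, Finset.sum_powerset_insert haU]
      have h1 : ∀ t ∈ (B₁ ∪ B₂).powerset,
          wt p q (insert a (B₁ ∪ B₂)) t * F (t ∩ B₁) = q * (wt p q (B₁ ∪ B₂) t * F (t ∩ B₁)) := by
        intro t ht
        have hat : a ∉ t := fun h => haU (Finset.mem_powerset.mp ht h)
        rw [wt_insert haU, if_neg hat]; ring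
      have h2 : ∀ t ∈ (B₁ ∪ B₂).powerset,
          wt p q (insert a (B₁ ∪ B₂)) (insert a t) * F ((insert a t) ∩ B₁)
            = p * (wt p q (B₁ ∪ B₂) t * F (t ∩ B₁)) := by
        intro t ht
        have h3 : (insert a t) ∩ B₁ = t ∩ B₁ := by
          ext y
          simp only [Finset.mem_inter, Finset.mem_insert]
          constructor
          · rintro ⟨(rfl | hyt), hyB⟩
            · exact absurd hyB haB₁
            · exact ⟨hyt, hyB⟩
          · rintro ⟨hyt, hyB⟩
            exact ⟨Or.inr hyt, hyB⟩
        rw [wt_insert haU, if_pos (Finset.mem_insert_self a t), wt_insert_right haU, h3]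
        ring
      rw [Finset.sum_congr rfl h1, Finset.sum_congr rfl h2, ← Finset.mul_sum, ← Finset.mul_sum,
        ih B₁ hdisj' F, Finset.card_insert_of_notMem haB₂, pow_succ]
      ring


lemma wt_total (p q : ℝ) (B : Finset V) :
    ∑ t ∈ B.powerset, wt p q B t = (p + q) ^ B.card := by
  have h := wt_split p q B ∅ (Finset.disjoint_empty_left B) (fun _ => (1 : ℝ))
  simpa [wt] using h

section localize
variable [Fintype V] {p q : ℝ}

lemma wt_localize (hpq : p + q = 1) (B₁ : Finset V) (F : Finset V → ℝ) :
    ∑ s ∈ (Finset.univ : Finset V).powerset, wt p q Finset.univ s * F (s ∩ B₁)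
      = ∑ t ∈ B₁.powerset, wt p q B₁ t * F t := by
  have hU : B₁ ∪ (Finset.univ \ B₁) = Finset.univ :=
    Finset.union_sdiff_of_subset (Finset.subset_univ B₁)
  have h := wt_split p q (Finset.univ \ B₁) B₁ Finset.disjoint_sdiff F
  rw [hU] at h
  rw [h, hpq, one_pow, one_mul]

lemma wt_sum_one (hpq : p + q = 1) :
    ∑ s ∈ (Finset.univ : Finset V).powerset, wt p q Finset.univ s = 1 := by
  have h := wt_localize (p := p) (q := q) hpq (∅ : Finset V) (fun _ => (1 : ℝ))
  simpa [wt] using h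

end localize

section pervertex
variable {p q : ℝ}

lemma pv_indicator (hpq : p + q = 1) {a : V} {B : Finset V} (ha : a ∈ B) :
    ∑ t ∈ B.powerset, wt p q B t * (if a ∈ t then (1 : ℝ) else 0) = p := by
  obtain ⟨B', haB', rfl⟩ : ∃ B', a ∉ B' ∧ insert a B' = B :=
    ⟨B.erase a, Finset.notMem_erase a B, Finset.insert_erase ha⟩
  rw [Finset.sum_powerset_insert haB']
  have h1 : ∀ t ∈ B'.powerset, wt p q (insert a B') t * (if a ∈ t then (1:ℝ) else 0) = 0 := by
    intro t ht
    have hat : a ∉ t := fun h => haB' (Finset.mem_powerset.mp ht h)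
    rw [if_neg hat, mul_zero]
  have h2 : ∀ t ∈ B'.powerset,
      wt p q (insert a B') (insert a t) * (if a ∈ insert a t then (1:ℝ) else 0)
        = p * wt p q B' t := by
    intro t ht
    rw [if_pos (Finset.mem_insert_self a t), wt_insert haB',
      if_pos (Finset.mem_insert_self a t), wt_insert_right haB', mul_one]
  rw [Finset.sum_congr rfl h1, Finset.sum_congr rfl h2, Finset.sum_const, smul_zero, zero_add,
    ← Finset.mul_sum, wt_total, hpq, one_pow, mul_one]

lemma pv_empty {B : Finset V} :
    ∑ t ∈ B.powerset, wt p q B t * (if t = ∅ then (1 : ℝ) else 0) = q ^ B.card := by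
  rw [Finset.sum_eq_single (∅ : Finset V)]
  · rw [if_pos rfl, mul_one, wt_empty_right]
  · intro t _ htne
    rw [if_neg htne, mul_zero]
  · intro h
    exact absurd (Finset.empty_mem_powerset B) h

lemma binom_bound (hp : 0 ≤ p) (hq : 0 ≤ q) (hpq : p + q = 1) (d : ℕ) :
    ∑ j ∈ Finset.range (d + 1),
        (d.choose j : ℝ) * (p ^ (j+1) * q ^ (d - j) * (1 / ((j:ℝ) + 1)))
      ≤ 1 / ((d : ℝ) + 1) := by
  have hd1 : ((d : ℝ) + 1) ≠ 0 := by positivity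
  have key : ∀ j, (d.choose j : ℝ) * (p ^ (j+1) * q ^ (d - j) * (1 / ((j:ℝ) + 1)))
      = (1 / ((d:ℝ) + 1)) * (((d+1).choose (j+1) : ℝ) * (p ^ (j+1) * q ^ (d - j))) := by
    intro j
    have hnat : (d + 1) * d.choose j = (d+1).choose (j+1) * (j+1) := Nat.add_one_mul_choose_eq d j
    have hr : ((d:ℝ) + 1) * (d.choose j : ℝ) = ((d+1).choose (j+1) : ℝ) * ((j:ℝ) + 1) := by
      exact_mod_cast hnat
    have hj1 : ((j:ℝ) + 1) ≠ 0 := by positivity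
    have eq₁ : (d.choose j : ℝ) / ((j:ℝ) + 1) = ((d+1).choose (j+1) : ℝ) / ((d:ℝ) + 1) := by
      rw [div_eq_div_iff hj1 hd1]
      linarith [hr]
    calc (d.choose j : ℝ) * (p ^ (j+1) * q ^ (d - j) * (1 / ((j:ℝ) + 1)))
        = ((d.choose j : ℝ) / ((j:ℝ) + 1)) * (p ^ (j+1) * q ^ (d - j)) := by ring
      _ = (((d+1).choose (j+1) : ℝ) / ((d:ℝ) + 1)) * (p ^ (j+1) * q ^ (d - j)) := by rw [eq₁]
      _ = (1 / ((d:ℝ) + 1)) * (((d+1).choose (j+1) : ℝ) * (p ^ (j+1) * q ^ (d - j))) := by ring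
  rw [Finset.sum_congr rfl (fun j _ => key j), ← Finset.mul_sum]
  have hsum : ∑ j ∈ Finset.range (d + 1), (((d+1).choose (j+1) : ℝ) * (p ^ (j+1) * q ^ (d - j)))
      ≤ 1 := by
    have hbin : ∑ i ∈ Finset.range (d + 2), p ^ i * q ^ (d + 1 - i) * ((d+1).choose i : ℝ)
        = 1 := by
      rw [← add_pow p q (d+1), hpq, one_pow]
    have hsplit := Finset.sum_range_succ'
      (fun i => p ^ i * q ^ (d + 1 - i) * ((d+1).choose i : ℝ)) (d + 1)
    have hf0 : (0:ℝ) ≤ p ^ 0 * q ^ (d + 1 - 0) * ((d+1).choose 0 : ℝ) := by positivity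
    have hterm : ∀ j, p ^ (j+1) * q ^ (d + 1 - (j+1)) * ((d+1).choose (j+1) : ℝ)
        = ((d+1).choose (j+1) : ℝ) * (p ^ (j+1) * q ^ (d - j)) := by
      intro j
      rw [Nat.succ_sub_succ]
      ring
    calc ∑ j ∈ Finset.range (d + 1), (((d+1).choose (j+1) : ℝ) * (p ^ (j+1) * q ^ (d - j)))
        = ∑ j ∈ Finset.range (d + 1),
            p ^ (j+1) * q ^ (d + 1 - (j+1)) * ((d+1).choose (j+1) : ℝ) := by
          exact Finset.sum_congr rfl (fun j _ => (hterm j).symm)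
      _ ≤ ∑ i ∈ Finset.range (d + 2), p ^ i * q ^ (d + 1 - i) * ((d+1).choose i : ℝ) := by
          rw [hsplit]
          exact le_add_of_nonneg_right hf0
      _ = 1 := hbin
  have h1d : (0:ℝ) ≤ 1 / ((d:ℝ) + 1) := by positivity
  calc (1 / ((d:ℝ) + 1)) * ∑ j ∈ Finset.range (d + 1),
          (((d+1).choose (j+1) : ℝ) * (p ^ (j+1) * q ^ (d - j)))
      ≤ (1 / ((d:ℝ) + 1)) * 1 := by
        apply mul_le_mul_of_nonneg_left hsum h1d
    _ = 1 / ((d:ℝ) + 1) := mul_one _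


lemma pv_carowei (hp : 0 ≤ p) (hq : 0 ≤ q) (hpq : p + q = 1) {a : V} {B : Finset V}
    (ha : a ∈ B) :
    ∑ t ∈ B.powerset, wt p q B t * (if a ∈ t then 1 / (t.card : ℝ) else 0)
      ≤ 1 / (B.card : ℝ) := by
  obtain ⟨B', haB', rfl⟩ : ∃ B', a ∉ B' ∧ insert a B' = B :=
    ⟨B.erase a, Finset.notMem_erase a B, Finset.insert_erase ha⟩
  set d := B'.card with hd
  have hcard : (insert a B').card = d + 1 := Finset.card_insert_of_notMem haB'
  rw [Finset.sum_powerset_insert haB']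
  have h1 : ∀ t ∈ B'.powerset,
      wt p q (insert a B') t * (if a ∈ t then 1/(t.card:ℝ) else 0) = 0 := by
    intro t ht
    have hat : a ∉ t := fun h => haB' (Finset.mem_powerset.mp ht h)
    rw [if_neg hat, mul_zero]
  have h2 : ∀ t ∈ B'.powerset,
      wt p q (insert a B') (insert a t)
          * (if a ∈ insert a t then 1/(((insert a t).card : ℕ) : ℝ) else 0)
        = (fun c : ℕ => (d.choose c : ℝ) * 0 + (p ^ (c+1) * q ^ (d - c) * (1/((c:ℝ)+1)))) t.card := by
    intro t ht
    have htB' : t ⊆ B' := Finset.mem_powerset.mp ht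
    have hat : a ∉ t := fun h => haB' (htB' h)
    rw [if_pos (Finset.mem_insert_self a t), wt_insert haB',
      if_pos (Finset.mem_insert_self a t), wt_insert_right haB',
      wt_pow htB', Finset.card_insert_of_notMem hat]
    push_cast
    ring
  rw [Finset.sum_congr rfl h1, Finset.sum_congr rfl h2, Finset.sum_const, smul_zero, zero_add,
    Finset.sum_powerset]
  have h3 : ∀ j ∈ Finset.range (d+1),
      (∑ t ∈ Finset.powersetCard j B',
        (fun c : ℕ => (d.choose c : ℝ) * 0 + (p ^ (c+1) * q ^ (d - c) * (1/((c:ℝ)+1)))) t.card)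
      = (d.choose j : ℝ) * (p ^ (j+1) * q ^ (d - j) * (1/((j:ℝ)+1))) := by
    intro j hj
    rw [Finset.sum_powersetCard j B'
      (fun c : ℕ => (d.choose c : ℝ) * 0 + (p ^ (c+1) * q ^ (d - c) * (1/((c:ℝ)+1))))]
    rw [← hd]
    rw [smul_add, nsmul_eq_mul, nsmul_eq_mul]
    ring
  rw [Finset.sum_congr rfl h3, hcard]
  have hb := binom_bound hp hq hpq d
  push_cast
  push_cast at hb
  exact hb

end pervertex

section existence
variable [Fintype V] {p q : ℝ}

lemma good_set_exists (G : SimpleGraph V) [DecidableRel G.Adj] (k : ℕ)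
    (hdeg : ∀ v, k ≤ G.degree v) (hp : 0 ≤ p) (hqpos : 0 < q) (hpq : p + q = 1) :
    ∃ A : Finset V,
      (A.card : ℝ)
        + 2 * (((Finset.univ.filter
            (fun v => (insert v (G.neighborFinset v)) ∩ A = ∅)) : Finset V).card : ℝ)
        + ∑ v ∈ A, 1 / (((insert v (G.neighborFinset v)) ∩ A).card : ℝ)
      ≤ (Fintype.card V : ℝ) * (p + 2 * q ^ (k+1) + 1 / ((k:ℝ)+1)) := by
  classical
  have hq : 0 ≤ q := le_of_lt hqpos
  set Nv : V → Finset V := fun v => insert v (G.neighborFinset v) with hNvdef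
  have hNvmem : ∀ v, v ∈ Nv v := fun v => Finset.mem_insert_self _ _
  have hNvcard : ∀ v, k + 1 ≤ (Nv v).card := by
    intro v
    have : (Nv v).card = G.degree v + 1 := by
      rw [hNvdef]
      simp [Finset.card_insert_of_notMem (G.notMem_neighborFinset_self v),
        SimpleGraph.card_neighborFinset_eq_degree]
    have h2 := hdeg v
    omega
  set Fv : V → Finset V → ℝ := fun v t =>
    ((if v ∈ t then (1:ℝ) else 0) + 2 * (if t = ∅ then (1:ℝ) else 0))
      + (if v ∈ t then 1/(t.card:ℝ) else 0) with hFvdef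
  set g : Finset V → ℝ := fun s => ∑ v ∈ Finset.univ, Fv v (Nv v ∩ s) with hgdef
  set bound : ℝ := (Fintype.card V : ℝ) * (p + 2 * q ^ (k+1) + 1 / ((k:ℝ)+1)) with hbounddef
  -- expectation bound
  have hEv : ∀ v : V, ∑ s ∈ (Finset.univ : Finset V).powerset, wt p q Finset.univ s * Fv v (Nv v ∩ s)
      ≤ p + 2 * q ^ (k+1) + 1 / ((k:ℝ)+1) := by
    intro v
    have hswap : ∀ s : Finset V, Nv v ∩ s = s ∩ Nv v := fun s => Finset.inter_comm _ _
    have h0 : ∑ s ∈ (Finset.univ : Finset V).powerset, wt p q Finset.univ s * Fv v (Nv v ∩ s)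
        = ∑ t ∈ (Nv v).powerset, wt p q (Nv v) t * Fv v t := by
      rw [← wt_localize hpq (Nv v) (Fv v)]
      exact Finset.sum_congr rfl (fun s _ => by rw [hswap s])
    rw [h0]
    have hsplit : ∀ t, wt p q (Nv v) t * Fv v t
        = (wt p q (Nv v) t * (if v ∈ t then (1:ℝ) else 0)
            + 2 * (wt p q (Nv v) t * (if t = ∅ then (1:ℝ) else 0)))
          + wt p q (Nv v) t * (if v ∈ t then 1/(t.card:ℝ) else 0) := by
      intro t
      rw [hFvdef]
      ring
    rw [Finset.sum_congr rfl (fun t _ => hsplit t), Finset.sum_add_distrib,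
      Finset.sum_add_distrib, ← Finset.mul_sum]
    have e1 := pv_indicator hpq (hNvmem v)
    have e2 := pv_empty (p := p) (q := q) (B := Nv v)
    have e3 := pv_carowei hp hq hpq (hNvmem v)
    rw [e1, e2]
    have hq1 : q ≤ 1 := by linarith
    have hqpow : q ^ (Nv v).card ≤ q ^ (k+1) :=
      pow_le_pow_of_le_one hq hq1 (hNvcard v)
    have hinv : 1 / ((Nv v).card : ℝ) ≤ 1 / ((k:ℝ)+1) := by
      apply one_div_le_one_div_of_le
      · positivity
      · exact_mod_cast hNvcard v
    have := le_trans e3 hinv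
    linarith
  have hEg : ∑ s ∈ (Finset.univ : Finset V).powerset, wt p q Finset.univ s * g s ≤ bound := by
    have hswap : ∑ s ∈ (Finset.univ : Finset V).powerset, wt p q Finset.univ s * g s
        = ∑ v ∈ (Finset.univ : Finset V), ∑ s ∈ (Finset.univ : Finset V).powerset,
            wt p q Finset.univ s * Fv v (Nv v ∩ s) := by
      rw [hgdef]
      simp only [Finset.mul_sum]
      rw [Finset.sum_comm]
    rw [hswap, hbounddef]
    calc ∑ v ∈ (Finset.univ : Finset V), ∑ s ∈ (Finset.univ : Finset V).powerset,
            wt p q Finset.univ s * Fv v (Nv v ∩ s)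
        ≤ ∑ _v ∈ (Finset.univ : Finset V), (p + 2 * q ^ (k+1) + 1 / ((k:ℝ)+1)) :=
          Finset.sum_le_sum (fun v _ => hEv v)
      _ = (Fintype.card V : ℝ) * (p + 2 * q ^ (k+1) + 1 / ((k:ℝ)+1)) := by
          rw [Finset.sum_const, Finset.card_univ, nsmul_eq_mul]
  -- identify g A with the target expression
  have hgval : ∀ A : Finset V,
      g A = (A.card : ℝ)
        + 2 * (((Finset.univ.filter (fun v => Nv v ∩ A = ∅)) : Finset V).card : ℝ)
        + ∑ v ∈ A, 1 / ((Nv v ∩ A).card : ℝ) := by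
    intro A
    have hg0 : g A = ∑ v ∈ Finset.univ, Fv v (Nv v ∩ A) := rfl
    rw [hg0]
    have hsplit : ∀ v, Fv v (Nv v ∩ A)
        = ((if v ∈ A then (1:ℝ) else 0) + 2 * (if Nv v ∩ A = ∅ then (1:ℝ) else 0))
          + (if v ∈ A then 1/((Nv v ∩ A).card:ℝ) else 0) := by
      intro v
      rw [hFvdef]
      have hmem : v ∈ Nv v ∩ A ↔ v ∈ A := by
        rw [Finset.mem_inter]
        exact ⟨fun h => h.2, fun h => ⟨hNvmem v, h⟩⟩
      by_cases hvA : v ∈ A <;> simp [hmem, hvA]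
    rw [Finset.sum_congr rfl (fun v _ => hsplit v), Finset.sum_add_distrib,
      Finset.sum_add_distrib]
    congr 1
    · congr 1
      · rw [Finset.sum_ite_mem, Finset.univ_inter, Finset.sum_const, nsmul_eq_mul, mul_one]
      · rw [← Finset.mul_sum]
        congr 1
        rw [Finset.sum_boole]
    · rw [Finset.sum_ite_mem, Finset.univ_inter]
  -- conclude by the first moment method
  by_contra hcon
  push_neg at hcon
  have hlt : ∀ A : Finset V, bound < g A := by
    intro A
    rw [hgval A]
    exact hcon A
  have hwtpos : 0 < wt p q (Finset.univ : Finset V) ∅ := by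
    rw [wt_empty_right]
    positivity
  have h1 : ∀ s ∈ (Finset.univ : Finset V).powerset,
      wt p q Finset.univ s * bound ≤ wt p q Finset.univ s * g s :=
    fun s _ => mul_le_mul_of_nonneg_left (le_of_lt (hlt s)) (wt_nonneg hp hq _ _)
  have h2 : (∅ : Finset V) ∈ (Finset.univ : Finset V).powerset :=
    Finset.empty_mem_powerset _
  have hstrict : ∑ s ∈ (Finset.univ : Finset V).powerset, wt p q Finset.univ s * bound
      < ∑ s ∈ (Finset.univ : Finset V).powerset, wt p q Finset.univ s * g s :=
    Finset.sum_lt_sum h1 ⟨∅, h2, mul_lt_mul_of_pos_left (hlt ∅) hwtpos⟩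
  have heq : ∑ s ∈ (Finset.univ : Finset V).powerset, wt p q Finset.univ s * bound = bound := by
    rw [← Finset.sum_mul, wt_sum_one hpq, one_mul]
  rw [heq] at hstrict
  exact absurd (lt_of_lt_of_le hstrict hEg) (lt_irrefl bound)

end existence

end prob
end CDNaux

/-- **Upper bound for the connected domination number.** For a connected graph `G` with `n`
vertices and minimum degree at least `k`, `γ_c(G) ≤ (n/(k+1))·(ln(k+1) + 4) - 2`. -/
theorem connectedDominationNumber_le {V : Type*} [Fintype V]
    (G : SimpleGraph V) [DecidableRel G.Adj] (n k : ℕ)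
    (hn : Fintype.card V = n) (hconn : G.Connected) (hdeg : ∀ v, k ≤ G.degree v) :
    (connectedDominationNumber G : ℝ) ≤
      (n : ℝ) / ((k : ℝ) + 1) * (Real.log ((k : ℝ) + 1) + 4) - 2 := by
  classical
  open CDNaux in
  subst hn
  set x : ℝ := (k : ℝ) + 1 with hxdef
  have hxpos : (0 : ℝ) < x := by positivity
  have hx1 : (1 : ℝ) ≤ x := by
    rw [hxdef]
    have : (0:ℝ) ≤ (k:ℝ) := Nat.cast_nonneg k
    linarith
  set p : ℝ := Real.log x / x with hpdef
  set q : ℝ := 1 - p with hqdef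
  have hp0 : 0 ≤ p := div_nonneg (Real.log_nonneg hx1) (le_of_lt hxpos)
  have hplt : p < 1 := by
    rw [hpdef, div_lt_one hxpos]
    calc Real.log x ≤ x - 1 := Real.log_le_sub_one_of_pos hxpos
      _ < x := by linarith
  have hq0 : 0 < q := by rw [hqdef]; linarith
  have hpq : p + q = 1 := by rw [hqdef]; ring
  obtain ⟨A, hA⟩ := good_set_exists G k hdeg hp0 hq0 hpq
  set B : Finset V := Finset.univ.filter
    (fun v => (insert v (G.neighborFinset v)) ∩ A = ∅) with hBdef
  set D : Set V := ↑A ∪ ↑B with hDdef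
  -- D is dominating
  have hdom : IsDominatingSet G D := by
    intro v hv
    have hvA : v ∉ A := fun h => hv (Or.inl h)
    have hvB : v ∉ B := fun h => hv (Or.inr h)
    have hne : (insert v (G.neighborFinset v)) ∩ A ≠ ∅ := by
      intro h
      exact hvB (Finset.mem_filter.mpr ⟨Finset.mem_univ v, h⟩)
    obtain ⟨u, hu⟩ := Finset.nonempty_iff_ne_empty.mpr hne
    obtain ⟨huNv, huA⟩ := Finset.mem_inter.mp hu
    have huv : u ≠ v := fun h => hvA (h ▸ huA)
    have hadj : G.Adj u v := by
      rcases Finset.mem_insert.mp huNv with h | h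
      · exact absurd h huv
      · exact ((SimpleGraph.mem_neighborFinset G v u).mp h).symm
    exact ⟨u, Or.inl huA, hadj⟩
  -- pieces
  obtain ⟨𝒞A, h𝒞A1, h𝒞A2, h𝒞A3⟩ := classes_exist G A
  set 𝒞B : Finset (Set V) := B.image (fun v => ({v} : Set V)) with h𝒞Bdef
  set 𝒞 : Finset (Set V) := 𝒞A ∪ 𝒞B with h𝒞def
  have h𝒞Bcover : ⋃₀ (↑𝒞B : Set (Set V)) = (↑B : Set V) := by
    apply Set.eq_of_subset_of_subset
    · rintro y ⟨C, hC, hyC⟩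
      obtain ⟨v, hv, rfl⟩ := Finset.mem_image.mp (Finset.mem_coe.mp hC)
      rw [Set.mem_singleton_iff] at hyC
      subst hyC
      exact hv
    · intro v hv
      exact ⟨{v}, Finset.mem_coe.mpr (Finset.mem_image_of_mem _ hv), rfl⟩
  have hpieces : ∀ C ∈ 𝒞, C.Nonempty ∧ C ⊆ D ∧ (G.induce C).Connected := by
    intro C hC
    rcases Finset.mem_union.mp hC with hC | hC
    · obtain ⟨h1, h2, h3⟩ := h𝒞A1 C hC
      exact ⟨h1, h2.trans Set.subset_union_left, h3⟩
    · obtain ⟨v, hv, rfl⟩ := Finset.mem_image.mp hC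
      refine ⟨⟨v, rfl⟩, ?_, induce_singleton_connected v⟩
      intro y hy
      rw [Set.mem_singleton_iff] at hy
      subst hy
      exact Or.inr hv
  have hcover : ⋃₀ (↑𝒞 : Set (Set V)) = D := by
    rw [h𝒞def, Finset.coe_union, Set.sUnion_union, h𝒞A2, h𝒞Bcover]
  have hDne : D.Nonempty := by
    rcases Finset.eq_empty_or_nonempty A with hAe | hAne
    · haveI := hconn.nonempty
      have v := Classical.arbitrary V
      have : v ∈ B := by
        rw [hBdef, Finset.mem_filter]
        exact ⟨Finset.mem_univ v, by rw [hAe, Finset.inter_empty]⟩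
      exact ⟨v, Or.inr this⟩
    · obtain ⟨v, hv⟩ := hAne
      exact ⟨v, Or.inl hv⟩
  have hpos : 0 < 𝒞.card := by
    rcases Finset.eq_empty_or_nonempty 𝒞 with he | hne
    · exfalso
      rw [he] at hcover
      simp only [Finset.coe_empty, Set.sUnion_empty] at hcover
      exact Set.not_nonempty_empty (hcover ▸ hDne)
    · exact Finset.card_pos.mpr hne
  obtain ⟨X, hXdom, hXconn, hXcard⟩ :=
    merge hconn hdeg 𝒞.card 𝒞 D hpieces hcover hdom rfl hpos
  -- pass to the reals
  have hγ : (connectedDominationNumber G : ℝ) ≤ (X.ncard : ℝ) := by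
    have hmem : X.ncard ∈ {c | ∃ Y : Set V, IsDominatingSet G Y ∧ (G.induce Y).Connected ∧
        Y.ncard = c} := ⟨X, hXdom, hXconn, rfl⟩
    have h := Nat.sInf_le hmem
    have h2 : connectedDominationNumber G ≤ X.ncard := h
    exact_mod_cast h2
  set M : ℕ := Fintype.card V / (k + 1) with hMdef
  have hXR : (X.ncard : ℝ) + 2 ≤ (D.ncard : ℝ) + 𝒞.card + M := by
    have h1 : X.ncard + 2 ≤ D.ncard + 𝒞.card + min 𝒞.card M := hXcard
    have h2 : min 𝒞.card M ≤ M := Nat.min_le_right _ _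
    exact_mod_cast le_trans h1 (by omega)
  have hDcard : (D.ncard : ℝ) ≤ (A.card : ℝ) + (B.card : ℝ) := by
    have h1 : D.ncard ≤ (↑A : Set V).ncard + (↑B : Set V).ncard :=
      Set.ncard_union_le _ _
    rw [Set.ncard_coe_finset, Set.ncard_coe_finset] at h1
    exact_mod_cast h1
  have h𝒞card : ((𝒞.card : ℕ) : ℝ) ≤ (𝒞A.card : ℝ) + (B.card : ℝ) := by
    have h1 : 𝒞.card ≤ 𝒞A.card + 𝒞B.card := Finset.card_union_le _ _
    have h2 : 𝒞B.card ≤ B.card := Finset.card_image_le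
    exact_mod_cast le_trans h1 (by omega)
  have hMR : (M : ℝ) ≤ (Fintype.card V : ℝ) / x := by
    have := Nat.cast_div_le (m := Fintype.card V) (n := k + 1) (α := ℝ)
    rw [hMdef]
    convert this using 2
    push_cast
    rfl
    simp [hxdef]
  -- the probabilistic bound
  have hqpow : q ^ (k + 1) ≤ 1 / x := by
    have h1 : q ≤ Real.exp (-p) := by
      have := Real.add_one_le_exp (-p)
      rw [hqdef]
      linarith
    have h2 : q ^ (k + 1) ≤ Real.exp (-p) ^ (k + 1) :=
      pow_le_pow_left₀ (le_of_lt hq0) h1 (k + 1)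
    have h3 : Real.exp (-p) ^ (k + 1) = Real.exp (-(p * x)) := by
      rw [← Real.exp_nat_mul]
      congr 1
      rw [hxdef]
      push_cast
      ring
    have h4 : p * x = Real.log x := by
      rw [hpdef]
      field_simp
    rw [h3, h4, Real.exp_neg, Real.exp_log hxpos] at h2
    rw [one_div]
    exact h2
  -- put everything together
  have hsum : (X.ncard : ℝ) ≤
      ((A.card : ℝ) + 2 * (B.card : ℝ)
        + ∑ v ∈ A, 1 / (((insert v (G.neighborFinset v)) ∩ A).card : ℝ))
      + (Fintype.card V : ℝ) / x - 2 := by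
    have := hXR
    have h3 := h𝒞A3
    linarith
  have hABbound : (A.card : ℝ) + 2 * (B.card : ℝ)
        + ∑ v ∈ A, 1 / (((insert v (G.neighborFinset v)) ∩ A).card : ℝ)
      ≤ (Fintype.card V : ℝ) * (p + 2 * q ^ (k+1) + 1 / x) := by
    have : (1 : ℝ) / ((k : ℝ) + 1) = 1 / x := by rw [hxdef]
    rw [← this]
    exact hA
  have hn0 : (0 : ℝ) ≤ (Fintype.card V : ℝ) := by positivity
  have hfinal : (Fintype.card V : ℝ) * (p + 2 * q ^ (k+1) + 1 / x)
      + (Fintype.card V : ℝ) / x - 2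
      ≤ (Fintype.card V : ℝ) / x * (Real.log x + 4) - 2 := by
    have h1 : (Fintype.card V : ℝ) * (p + 2 * q ^ (k+1) + 1 / x)
        ≤ (Fintype.card V : ℝ) * (p + 2 * (1/x) + 1 / x) := by
      apply mul_le_mul_of_nonneg_left _ hn0
      have := hqpow
      linarith
    have h2 : (Fintype.card V : ℝ) * (p + 2 * (1/x) + 1 / x) + (Fintype.card V : ℝ) / x
        = (Fintype.card V : ℝ) / x * (Real.log x + 4) := by
      rw [hpdef]
      field_simp
      ring
    linarith
  calc (connectedDominationNumber G : ℝ) ≤ (X.ncard : ℝ) := hγ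
    _ ≤ ((A.card : ℝ) + 2 * (B.card : ℝ)
          + ∑ v ∈ A, 1 / (((insert v (G.neighborFinset v)) ∩ A).card : ℝ))
        + (Fintype.card V : ℝ) / x - 2 := hsum
    _ ≤ (Fintype.card V : ℝ) * (p + 2 * q ^ (k+1) + 1 / x)
        + (Fintype.card V : ℝ) / x - 2 := by linarith
    _ ≤ (Fintype.card V : ℝ) / x * (Real.log x + 4) - 2 := hfinal
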